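/- arXiv:1402.1825 — 2 statements merged into one kernel-verified Lean document; each statement's English description precedes it below -/
import Mathlib

section
/- Let N ≥ 1 be an integer, a < b real numbers, and for 0 ≤ k ≤ N-1 define H_k^-(x) = ((b-x)/(b-a))^N · ((x-a)^k / k!) · ∑_{ℓ=0}^{N-k-1} C(ℓ+N-1, ℓ) ((x-a)/(b-a))^ℓ. Then for all 0 ≤ k, ℓ ≤ N-1: the ℓ-th derivative of H_k^- at a equals 1 if k = ℓ and 0 otherwise, and the ℓ-th derivative of H_k^- at b equals 0. -/
open Polynomial

lemma iterDeriv_polyEval (l : ℕ) (p : ℝ[X]) :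
    iteratedDeriv l (fun x => p.eval x) = fun x => ((derivative (R := ℝ))^[l] p).eval x := by
  induction l generalizing p with
  | zero => simp [iteratedDeriv_zero]
  | succ n ih =>
    rw [iteratedDeriv_succ, ih]
    funext x
    rw [Function.iterate_succ_apply']
    exact Polynomial.deriv _

lemma eval_iter_deriv (p : ℝ[X]) (r : ℝ) (l : ℕ) :
    ((derivative (R := ℝ))^[l] p).eval r = (Nat.factorial l : ℝ) * (Polynomial.taylor r p).coeff l := by
  rw [Polynomial.taylor_coeff, ← Polynomial.factorial_smul_hasseDeriv]
  simp [Polynomial.eval_smul, nsmul_eq_mul]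

lemma coeff_comp_scale (p : ℝ[X]) (r : ℝ) (n : ℕ) :
    (p.comp (C r * X)).coeff n = p.coeff n * r ^ n := by
  induction p using Polynomial.induction_on' with
  | add p q hp hq => simp [add_comp, hp, hq, add_mul]
  | monomial i a =>
    rw [Polynomial.monomial_comp, mul_pow, ← C_pow]
    simp only [coeff_monomial, mul_left_comm, coeff_C_mul, coeff_X_pow]
    by_cases h : i = n
    · simp [h]
    · have h' : ¬ n = i := fun hn => h hn.symm
      simp [h, h']

lemma keyW (N M m : ℕ) (hN : 1 ≤ N) (hm : m < M) :
    ((1 - Polynomial.X : ℝ[X]) ^ N *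
      ∑ j ∈ Finset.range M, C ((Nat.choose (j + N - 1) j : ℝ)) * Polynomial.X ^ j).coeff m
      = if m = 0 then 1 else 0 := by
  have h1 := PowerSeries.mk_add_choose_mul_one_sub_pow_eq_one ℝ (N - 1)
  rw [Nat.sub_add_cancel hN] at h1
  have h2 : PowerSeries.coeff m
      ((PowerSeries.mk fun n => ((N - 1 + n).choose (N - 1) : ℝ)) * (1 - PowerSeries.X) ^ N)
      = if m = 0 then 1 else 0 := by
    rw [h1, PowerSeries.coeff_one]
  rw [← h2, mul_comm, ← Polynomial.coeff_coe]
  rw [Polynomial.coe_mul, Polynomial.coe_pow, Polynomial.coe_sub, Polynomial.coe_one,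
    Polynomial.coe_X]
  rw [PowerSeries.coeff_mul, PowerSeries.coeff_mul]
  apply Finset.sum_congr rfl
  intro p hp
  rw [Finset.HasAntidiagonal.mem_antidiagonal] at hp
  congr 1
  rw [Polynomial.coeff_coe]
  have hpM : p.1 < M := lt_of_le_of_lt (le_trans (Nat.le_add_right _ _) hp.le) hm
  rw [Polynomial.finset_sum_coeff]
  simp only [Polynomial.coeff_C_mul, Polynomial.coeff_X_pow, mul_ite, mul_one, mul_zero]
  rw [Finset.sum_ite_eq (Finset.range M) p.1 (fun j => ((j + N - 1).choose j : ℝ)),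
    if_pos (Finset.mem_range.2 hpM), PowerSeries.coeff_mk]
  rw [show p.1 + N - 1 = p.1 + (N - 1) by omega, show N - 1 + p.1 = p.1 + (N - 1) by omega]
  exact_mod_cast congrArg (Nat.cast : ℕ → ℝ) (Nat.choose_symm_add (a := p.1) (b := N - 1))

noncomputable def hS (N k : ℕ) : ℝ[X] :=
  ∑ j ∈ Finset.range (N - k), C ((Nat.choose (j + N - 1) j : ℝ)) * X ^ j

noncomputable def hW (N k : ℕ) : ℝ[X] := (1 - X) ^ N * hS N k

noncomputable def hQ (N k : ℕ) (c : ℝ) : ℝ[X] :=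
  C ((Nat.factorial k : ℝ))⁻¹ * ((hW N k).comp (C c⁻¹ * X) * X ^ k)

noncomputable def hP (N k : ℕ) (c a : ℝ) : ℝ[X] := (hQ N k c).comp (X - C a)

lemma hQ_coeff (N k l : ℕ) (c : ℝ) (hN : 1 ≤ N) (hk : k ≤ N - 1) (hl : l ≤ N - 1) :
    (hQ N k c).coeff l = if k = l then ((Nat.factorial k : ℝ))⁻¹ else 0 := by
  rw [hQ, Polynomial.coeff_C_mul, Polynomial.coeff_mul_X_pow']
  by_cases hkl : k ≤ l
  · rw [if_pos hkl, coeff_comp_scale, hW, hS, keyW N (N - k) (l - k) hN (by omega)]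
    by_cases hkl2 : k = l
    · subst hkl2; simp
    · have h0 : ¬ (l - k = 0) := by omega
      simp [h0, hkl2]
  · rw [if_neg hkl, if_neg (by omega : ¬ k = l), mul_zero]

theorem stmt_4 (N : ℕ) (hN : 1 ≤ N) (a b : ℝ) (hab : a < b)
    (k l : ℕ) (hk : k ≤ N - 1) (hl : l ≤ N - 1) :
    iteratedDeriv l (fun x : ℝ =>
      ((b - x) / (b - a)) ^ N * ((x - a) ^ k / (Nat.factorial k : ℝ)) *
        ∑ j ∈ Finset.range (N - k),
          (Nat.choose (j + N - 1) j : ℝ) * ((x - a) / (b - a)) ^ j) a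
      = (if k = l then 1 else 0) ∧
    iteratedDeriv l (fun x : ℝ =>
      ((b - x) / (b - a)) ^ N * ((x - a) ^ k / (Nat.factorial k : ℝ)) *
        ∑ j ∈ Finset.range (N - k),
          (Nat.choose (j + N - 1) j : ℝ) * ((x - a) / (b - a)) ^ j) b
      = 0 := by
  have hc : (b - a) ≠ 0 := sub_ne_zero.2 hab.ne'
  have hfun : (fun x : ℝ =>
      ((b - x) / (b - a)) ^ N * ((x - a) ^ k / (Nat.factorial k : ℝ)) *
        ∑ j ∈ Finset.range (N - k),
          (Nat.choose (j + N - 1) j : ℝ) * ((x - a) / (b - a)) ^ j)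
      = fun x => (hP N k (b - a) a).eval x := by
    funext x
    simp only [hP, hQ, hW, hS, eval_comp, eval_mul, eval_pow, eval_sub, eval_one, eval_C,
      eval_X, eval_finset_sum]
    have hbx : (b - a)⁻¹ * (b - x) = 1 - (b - a)⁻¹ * (x - a) := by
      field_simp
      ring
    simp only [div_eq_inv_mul]
    rw [mul_pow (b-a)⁻¹ (b - x), ← mul_pow, hbx]
    simp only [mul_pow]
    ring
  rw [hfun]
  rw [iterDeriv_polyEval]
  constructor
  · simp only [eval_iter_deriv]
    have hta : Polynomial.taylor a (hP N k (b - a) a) = hQ N k (b - a) := by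
      rw [Polynomial.taylor_apply, hP, Polynomial.comp_assoc]
      simp
    rw [hta, hQ_coeff N k l (b - a) hN hk hl]
    by_cases hkl : k = l
    · subst hkl
      rw [if_pos rfl, if_pos rfl,
        mul_inv_cancel₀ (by exact_mod_cast Nat.factorial_ne_zero k)]
    · rw [if_neg hkl, if_neg hkl, mul_zero]
  · simp only [eval_iter_deriv]
    have hPfac : hP N k (b - a) a
        = ((1 : ℝ[X]) - C (b - a)⁻¹ * (X - C a)) ^ N *
          (C ((Nat.factorial k : ℝ))⁻¹ *
            (((hS N k).comp (C (b - a)⁻¹ * X)).comp (X - C a) * (X - C a) ^ k)) := by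
      simp only [hP, hQ, hW, mul_comp, pow_comp, sub_comp, one_comp, C_comp, X_comp]
      ring
    have hD : ((1 : ℝ[X]) - C (b - a)⁻¹ * (X - C a)).comp (X + C b)
        = C (-(b - a)⁻¹) * X := by
      have h2 : (C (b - a)⁻¹ : ℝ[X]) * C (b - a) = 1 := by
        rw [← C_mul, inv_mul_cancel₀ hc, C_1]
      simp only [sub_comp, one_comp, mul_comp, C_comp, X_comp, add_comp]
      rw [show (X : ℝ[X]) + C b - C a = X + C (b - a) by rw [C_sub]; ring]
      simp only [map_neg]
      linear_combination -h2
    rw [Polynomial.taylor_apply, hPfac]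
    simp only [mul_comp, pow_comp]
    rw [hD]
    rw [mul_pow, ← C_pow, mul_assoc, Polynomial.coeff_C_mul,
      mul_comm (X ^ N : ℝ[X]), Polynomial.coeff_mul_X_pow',
      if_neg (by omega : ¬ N ≤ l), mul_zero, mul_zero]
end

section
/- Let N ≥ 1 and p ≥ 0 be integers, and a, b real numbers. Define c_n = ∑_{k=0}^{n} C(N+k-1,k)·C(N+n-1-k,n-k)·a^k·b^{n-k}. Then the remainder of the Euclidean division of x^{2N+p} by (x-a)^N(x-b)^N equals x^{2N+p} - (∑_{n=0}^{p} c_{p-n} x^n)·(x-a)^N(x-b)^N, i.e., x^{2N+p} - (∑_{n=0}^{p} c_{p-n} x^n)(x-a)^N(x-b)^N is a polynomial of degree at most 2N-1. -/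
open Polynomial Finset

lemma geom (a : ℝ) : ∀ N : ℕ,
    (PowerSeries.mk fun k => ((N + k - 1).choose k : ℝ) * a ^ k) *
      (1 - PowerSeries.C a * PowerSeries.X) ^ N = 1 := by
  intro N
  induction N with
  | zero =>
    ext k
    cases k with
    | zero => simp
    | succ k => simp [Nat.choose_eq_zero_of_lt]
  | succ N ih =>
    have step : (PowerSeries.mk fun k => ((N + 1 + k - 1).choose k : ℝ) * a ^ k) *
        (1 - PowerSeries.C a * PowerSeries.X) =
        (PowerSeries.mk fun k => ((N + k - 1).choose k : ℝ) * a ^ k) := by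
      ext k
      rw [mul_sub, mul_one, map_sub, ← mul_assoc]
      cases k with
      | zero => simp
      | succ k =>
        rw [PowerSeries.coeff_succ_mul_X, PowerSeries.coeff_mul_C]
        simp only [PowerSeries.coeff_mk]
        have h1 : N + 1 + (k + 1) - 1 = N + k + 1 := by omega
        have h2 : N + 1 + k - 1 = N + k := by omega
        have h3 : N + (k + 1) - 1 = N + k := by omega
        rw [h1, h2, h3, Nat.choose_succ_succ]
        push_cast
        ring
    rw [pow_succ', ← mul_assoc, step, ih]

lemma rev_X_sub_C (a : ℝ) : (X - C a : ℝ[X]).reverse = 1 - C a * X := by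
  have hd : (X - C a : ℝ[X]).natDegree = 1 := natDegree_X_sub_C a
  ext n
  rw [coeff_reverse, hd]
  match n with
  | 0 => simp
  | 1 => rw [revAt_le (le_refl 1)]; simp [coeff_one]
  | (n+2) =>
    rw [revAt_eq_self_of_lt (by omega)]
    have h1 : (X - C a : ℝ[X]).coeff (n+2) = 0 :=
      coeff_eq_zero_of_natDegree_lt (by rw [hd]; omega)
    have h2 : (1 - C a * X : ℝ[X]).coeff (n+2) = 0 := by
      simp [coeff_one, coeff_X]
    rw [h1, h2]

lemma rev_D (N : ℕ) (a b : ℝ) :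
    ((X - C a) ^ N * (X - C b) ^ N : ℝ[X]).reverse =
      (1 - C a * X) ^ N * (1 - C b * X) ^ N := by
  have h : ∀ q r : ℝ[X], (q * r).reverse = q.reverse * r.reverse :=
    reverse_mul_of_domain
  have hp : ∀ (q : ℝ[X]) (n : ℕ), (q ^ n).reverse = q.reverse ^ n := by
    intro q n
    induction n with
    | zero => rw [pow_zero, pow_zero, ← C_1, reverse_C]
    | succ n ih => rw [pow_succ, h, ih, pow_succ]
  rw [h, hp, hp, rev_X_sub_C, rev_X_sub_C]

theorem stmt_14 (N p : ℕ) (hN : 1 ≤ N) (a b : ℝ) :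
    ((Polynomial.X ^ (2 * N + p) -
      (∑ n ∈ Finset.range (p + 1),
        Polynomial.C (∑ k ∈ Finset.range (p - n + 1),
          (Nat.choose (N + k - 1) k : ℝ) * (Nat.choose (N + (p - n) - 1 - k) (p - n - k) : ℝ)
            * a ^ k * b ^ (p - n - k)) * Polynomial.X ^ n) *
      ((Polynomial.X - Polynomial.C a) ^ N * (Polynomial.X - Polynomial.C b) ^ N)
      : Polynomial ℝ).degree ≤ (2 * N - 1 : ℕ)) := by
  set c : ℕ → ℝ := fun j => ∑ k ∈ Finset.range (j + 1),
      (Nat.choose (N + k - 1) k : ℝ) * (Nat.choose (N + j - 1 - k) (j - k) : ℝ)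
        * a ^ k * b ^ (j - k) with hc
  set D : ℝ[X] := (X - C a) ^ N * (X - C b) ^ N with hDdef
  set Dh : ℝ[X] := (1 - C a * X) ^ N * (1 - C b * X) ^ N with hDh
  -- degrees
  have hDm : D.Monic := ((monic_X_sub_C a).pow N).mul ((monic_X_sub_C b).pow N)
  have hDdeg : D.natDegree = 2 * N := by
    rw [hDdef, natDegree_mul (pow_ne_zero _ (X_sub_C_ne_zero a))
      (pow_ne_zero _ (X_sub_C_ne_zero b)), natDegree_pow, natDegree_pow,
      natDegree_X_sub_C, natDegree_X_sub_C]
    ring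
  have hDhdeg : Dh.natDegree ≤ 2 * N := by
    calc Dh.natDegree ≤ ((1 - C a * X : ℝ[X]) ^ N).natDegree +
        ((1 - C b * X : ℝ[X]) ^ N).natDegree := natDegree_mul_le
      _ ≤ 2 * N := by
        have h1 : ((1 - C a * X : ℝ[X]) ^ N).natDegree ≤ N := by
          apply natDegree_pow_le.trans
          have : (1 - C a * X : ℝ[X]).natDegree ≤ 1 :=
            (natDegree_sub_le _ _).trans (by
              simp [natDegree_one, natDegree_C_mul_le]
              exact (natDegree_C_mul_le a X).trans (by simp))
          exact Nat.mul_le_mul_left N this |>.trans (by omega)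
        have h2 : ((1 - C b * X : ℝ[X]) ^ N).natDegree ≤ N := by
          apply natDegree_pow_le.trans
          have : (1 - C b * X : ℝ[X]).natDegree ≤ 1 :=
            (natDegree_sub_le _ _).trans (by
              simp [natDegree_one]
              exact (natDegree_C_mul_le b X).trans (by simp))
          exact Nat.mul_le_mul_left N this |>.trans (by omega)
        omega
  -- coefficient relation via reverse
  have hrev : ∀ t : ℕ, t ≤ 2 * N → Dh.coeff t = D.coeff (2 * N - t) := by
    intro t ht
    rw [hDh, ← rev_D, coeff_reverse, hDdeg]
    rw [revAt_le ht]
  -- power series identity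
  have hkey : ∀ s : ℕ,
      (∑ j ∈ Finset.range (s + 1), c j * Dh.coeff (s - j)) =
        (if s = 0 then (1 : ℝ) else 0) := by
    intro s
    have hA := geom a N
    have hB := geom b N
    have hprod :
        ((PowerSeries.mk fun k => ((N + k - 1).choose k : ℝ) * a ^ k) *
          (PowerSeries.mk fun k => ((N + k - 1).choose k : ℝ) * b ^ k)) *
          ((Dh : ℝ[X]) : PowerSeries ℝ) = 1 := by
      have hcoe : ((Dh : ℝ[X]) : PowerSeries ℝ) =
          (1 - PowerSeries.C a * PowerSeries.X) ^ N *
            (1 - PowerSeries.C b * PowerSeries.X) ^ N := by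
        rw [hDh]
        push_cast
        simp [Polynomial.coe_pow, Polynomial.coe_mul, Polynomial.coe_sub,
          Polynomial.coe_one, Polynomial.coe_C, Polynomial.coe_X]
      rw [hcoe]
      calc ((PowerSeries.mk fun k => ((N + k - 1).choose k : ℝ) * a ^ k) *
            (PowerSeries.mk fun k => ((N + k - 1).choose k : ℝ) * b ^ k)) *
            ((1 - PowerSeries.C a * PowerSeries.X) ^ N *
              (1 - PowerSeries.C b * PowerSeries.X) ^ N)
          = ((PowerSeries.mk fun k => ((N + k - 1).choose k : ℝ) * a ^ k) *
              (1 - PowerSeries.C a * PowerSeries.X) ^ N) *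
            ((PowerSeries.mk fun k => ((N + k - 1).choose k : ℝ) * b ^ k) *
              (1 - PowerSeries.C b * PowerSeries.X) ^ N) := by ring
        _ = 1 := by rw [hA, hB, one_mul]
    have := congrArg (PowerSeries.coeff s) hprod
    rw [PowerSeries.coeff_mul] at this
    rw [Finset.Nat.sum_antidiagonal_eq_sum_range_succ_mk] at this
    have hG : ∀ k : ℕ, (PowerSeries.coeff k)
        ((PowerSeries.mk fun k => ((N + k - 1).choose k : ℝ) * a ^ k) *
          (PowerSeries.mk fun k => ((N + k - 1).choose k : ℝ) * b ^ k)) = c k := by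
      intro k
      rw [PowerSeries.coeff_mul, Finset.Nat.sum_antidiagonal_eq_sum_range_succ_mk, hc]
      apply Finset.sum_congr rfl
      intro i hi
      simp only [Finset.mem_range] at hi
      simp only [PowerSeries.coeff_mk]
      have : N + k - 1 - i = N + (k - i) - 1 := by omega
      rw [this]
      ring
    simp only [hG, Polynomial.coeff_coe] at this
    rw [this, PowerSeries.coeff_one]
  -- main coefficient computation
  rw [degree_le_iff_coeff_zero]
  intro m hm
  have hm' : 2 * N ≤ m := by
    have h2 : 2 * N - 1 < m := by exact_mod_cast hm
    omega
  rw [coeff_sub, coeff_X_pow, Finset.sum_mul, finset_sum_coeff]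
  have hterm : ∀ n : ℕ,
      (C (c (p - n)) * X ^ n * D).coeff m =
        c (p - n) * (if n ≤ m then D.coeff (m - n) else 0) := by
    intro n
    rw [mul_assoc, coeff_C_mul, mul_comm (X ^ n : ℝ[X]) D, coeff_mul_X_pow']
  rw [Finset.sum_congr rfl (fun n _ => hterm n)]
  rcases le_or_gt m (2 * N + p) with hmle | hmgt
  · set s : ℕ := 2 * N + p - m with hs
    have hsp : s ≤ p := by omega
    have key := hkey s
    have reflct : (∑ n ∈ Finset.range (p + 1),
        c (p - n) * (if n ≤ m then D.coeff (m - n) else 0)) =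
        ∑ j ∈ Finset.range (p + 1),
          c (p - (p - j)) * (if p - j ≤ m then D.coeff (m - (p - j)) else 0) := by
      rw [← Finset.sum_range_reflect]
      simp only [Nat.add_sub_cancel]
    rw [reflct]
    have step2 : (∑ j ∈ Finset.range (p + 1),
        c (p - (p - j)) * (if p - j ≤ m then D.coeff (m - (p - j)) else 0)) =
        ∑ j ∈ Finset.range (p + 1),
          (if j ≤ s then c j * Dh.coeff (s - j) else 0) := by
      apply Finset.sum_congr rfl
      intro j hj
      simp only [Finset.mem_range] at hj
      have hjp : j ≤ p := by omega
      have hcc : p - (p - j) = j := by omega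
      rw [hcc]
      by_cases hjs : j ≤ s
      · rw [if_pos hjs]
        by_cases hcond : p - j ≤ m
        · rw [if_pos hcond]
          have ht2 : s - j ≤ 2 * N := by omega
          rw [hrev (s - j) ht2]
          have : 2 * N - (s - j) = m - (p - j) := by omega
          rw [this]
        · rw [if_neg hcond]
          have : Dh.coeff (s - j) = 0 := by
            apply coeff_eq_zero_of_natDegree_lt
            exact lt_of_le_of_lt hDhdeg (by omega)
          rw [this, mul_zero]
      · rw [if_neg hjs]
        have hcond : p - j ≤ m := by omega
        rw [if_pos hcond]
        have : D.coeff (m - (p - j)) = 0 := by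
          apply coeff_eq_zero_of_natDegree_lt
          rw [hDdeg]; omega
        rw [this, mul_zero]
    rw [step2]
    have step3 : (∑ j ∈ Finset.range (p + 1),
        (if j ≤ s then c j * Dh.coeff (s - j) else 0)) =
        ∑ j ∈ Finset.range (s + 1), c j * Dh.coeff (s - j) := by
      have e1 : (∑ j ∈ Finset.range (s + 1), c j * Dh.coeff (s - j)) =
          ∑ j ∈ Finset.range (s + 1), (if j ≤ s then c j * Dh.coeff (s - j) else 0) :=
        Finset.sum_congr rfl (fun j hj => by
          rw [if_pos (by simp only [Finset.mem_range] at hj; omega)])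
      rw [e1]
      exact (Finset.sum_subset (Finset.range_subset_range.2 (by omega)) (fun x hx hnx => by
        simp only [Finset.mem_range] at hx hnx
        rw [if_neg (by omega)])).symm
    rw [step3, key]
    have : (m = 2 * N + p) ↔ (s = 0) := by omega
    by_cases hh : m = 2 * N + p
    · rw [if_pos hh, if_pos (this.mp hh)]; ring
    · rw [if_neg hh, if_neg (fun h0 => hh (by omega))]; ring
  · rw [if_neg (by omega)]
    have : ∀ n ∈ Finset.range (p + 1),
        c (p - n) * (if n ≤ m then D.coeff (m - n) else 0) = 0 := by
      intro n hn
      simp only [Finset.mem_range] at hn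
      have hnm : n ≤ m := by omega
      rw [if_pos hnm]
      have : D.coeff (m - n) = 0 := by
        apply coeff_eq_zero_of_natDegree_lt
        rw [hDdeg]; omega
      rw [this, mul_zero]
    rw [Finset.sum_eq_zero this]
    ring
end
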